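/- Fix an integer K ≥ 1, α ∈ (0,∞)^K with θ := ∑_{i=1}^K α_i, and m ∈ ℕ^K. Then for every x ∈ ℝ^K: (1/2) ∑_{i,j=1}^K x_i (δ_{ij} − x_j) ∂²h^W(x,m)/∂x_i∂x_j + (1/2) ∑_{i=1}^K (α_i − θ x_i) ∂h^W(x,m)/∂x_i = ((θ+|m|−1)/2) ∑_{i : m_i ≥ 1} m_i h^W(x, m − e_i) − (|m|(θ+|m|−1)/2) h^W(x, m). This is the generator computation establishing that the Wright–Fisher generator acts on the duality functions h^W(·, m) as the generator of a pure-death process that jumps from m to m − e_i at rate m_i(θ+|m|−1)/2 (the core computation in the proof of Theorem 3.1). -/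

import Mathlib

open Finset

set_option maxHeartbeats 1000000

/-- The Wright--Fisher duality function `h^W(x, m)`. -/
noncomputable def hW {K : ℕ} (α : Fin K → ℝ) (x : Fin K → ℝ) (m : Fin K → ℕ) : ℝ :=
  (Real.Gamma ((∑ i, α i) + ∑ i, (m i : ℝ)) / Real.Gamma (∑ i, α i)) *
    (∏ j, Real.Gamma (α j) / Real.Gamma (α j + m j)) * ∏ j, x j ^ m j

/-- Partial derivative in the `i`-th coordinate. -/
noncomputable def pd {K : ℕ} (f : (Fin K → ℝ) → ℝ) (i : Fin K) (x : Fin K → ℝ) : ℝ :=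
  deriv (fun w => f (Function.update x i w)) (x i)

/-! ### Auxiliary definitions and lemmas -/

/-- The monomial part of `hW`. -/
noncomputable def Pm {K : ℕ} (m : Fin K → ℕ) (x : Fin K → ℝ) : ℝ := ∏ j, x j ^ m j

/-- The constant (Gamma) part of `hW`. -/
noncomputable def Cm {K : ℕ} (α : Fin K → ℝ) (m : Fin K → ℕ) : ℝ :=
  (Real.Gamma ((∑ i, α i) + ∑ i, (m i : ℝ)) / Real.Gamma (∑ i, α i)) *
    ∏ j, Real.Gamma (α j) / Real.Gamma (α j + m j)

lemma hW_eq {K : ℕ} (α : Fin K → ℝ) (x : Fin K → ℝ) (m : Fin K → ℕ) :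
    hW α x m = Cm α m * Pm m x := rfl

lemma sub_single_apply_self {K : ℕ} (m : Fin K → ℕ) (i : Fin K) :
    (m - Pi.single i 1 : Fin K → ℕ) i = m i - 1 := by simp [Pi.sub_apply]

lemma sub_single_apply_ne {K : ℕ} (m : Fin K → ℕ) {i j : Fin K} (h : j ≠ i) :
    (m - Pi.single i 1 : Fin K → ℕ) j = m j := by simp [Pi.sub_apply, Pi.single_eq_of_ne h]

lemma Pm_split {K : ℕ} (m : Fin K → ℕ) (x : Fin K → ℝ) (i : Fin K) :
    Pm m x = x i ^ m i * ∏ j ∈ univ.erase i, x j ^ m j :=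
  (Finset.mul_prod_erase _ _ (mem_univ i)).symm

lemma Pm_sub_single {K : ℕ} (m : Fin K → ℕ) (x : Fin K → ℝ) (i : Fin K) :
    Pm (m - Pi.single i 1) x = x i ^ (m i - 1) * ∏ j ∈ univ.erase i, x j ^ m j := by
  rw [Pm_split (m - Pi.single i 1) x i, sub_single_apply_self]
  congr 1
  refine Finset.prod_congr rfl fun j hj => ?_
  rw [sub_single_apply_ne m (mem_erase.mp hj).1]

lemma x_mul_Pm {K : ℕ} (m : Fin K → ℕ) (i : Fin K) (x : Fin K → ℝ) (h : 1 ≤ m i) :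
    x i * Pm (m - Pi.single i 1) x = Pm m x := by
  rw [Pm_sub_single, Pm_split m x i, ← mul_assoc, ← pow_succ', Nat.sub_add_cancel h]

lemma xP {K : ℕ} (m : Fin K → ℕ) (i : Fin K) (x : Fin K → ℝ) :
    (m i : ℝ) * (x i * Pm (m - Pi.single i 1) x) = (m i : ℝ) * Pm m x := by
  rcases Nat.eq_zero_or_pos (m i) with h | h
  · simp [h]
  · rw [x_mul_Pm m i x h]

lemma pd_Pm {K : ℕ} (m : Fin K → ℕ) (i : Fin K) (x : Fin K → ℝ) :
    pd (Pm m) i x = (m i : ℝ) * Pm (m - Pi.single i 1) x := by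
  unfold pd
  have h1 : (fun w => Pm m (Function.update x i w))
      = fun w => w ^ m i * ∏ j ∈ univ.erase i, x j ^ m j := by
    funext w
    simp only [Pm]
    rw [← Finset.mul_prod_erase _ _ (mem_univ i), Function.update_self]
    congr 1
    exact Finset.prod_congr rfl fun j hj => by
      rw [Function.update_of_ne (mem_erase.mp hj).1]
  rw [h1, deriv_mul_const_field, deriv_pow_field, Pm_sub_single]
  ring

lemma pd_const_mul {K : ℕ} (c : ℝ) (f : (Fin K → ℝ) → ℝ) (i : Fin K) (x : Fin K → ℝ) :
    pd (fun y => c * f y) i x = c * pd f i x := by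
  unfold pd
  exact deriv_const_mul_field c

lemma pd_hW {K : ℕ} (α : Fin K → ℝ) (m : Fin K → ℕ) (i : Fin K) (x : Fin K → ℝ) :
    pd (fun y => hW α y m) i x
      = Cm α m * ((m i : ℝ) * Pm (m - Pi.single i 1) x) := by
  have h : (fun y => hW α y m) = fun y => Cm α m * Pm m y := by
    funext y; exact hW_eq α y m
  rw [h, pd_const_mul, pd_Pm]

lemma pd2_hW {K : ℕ} (α : Fin K → ℝ) (m : Fin K → ℕ) (i j : Fin K) (x : Fin K → ℝ) :
    pd (pd (fun y => hW α y m) j) i x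
      = Cm α m * ((m j : ℝ) * (((m - Pi.single j 1 : Fin K → ℕ) i : ℝ) *
          Pm (m - Pi.single j 1 - Pi.single i 1) x)) := by
  have h : pd (fun y => hW α y m) j
      = fun y => (Cm α m * (m j : ℝ)) * Pm (m - Pi.single j 1) y := by
    funext y; rw [pd_hW]; ring
  rw [h, pd_const_mul, pd_Pm]
  ring

lemma sum_sub_single {K : ℕ} (m : Fin K → ℕ) (j : Fin K) (h : 1 ≤ m j) :
    ∑ i, (((m - Pi.single j 1 : Fin K → ℕ) i : ℕ) : ℝ) = (∑ i, (m i : ℝ)) - 1 := by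
  have hterm : ∀ i ∈ (univ : Finset (Fin K)),
      (((m - Pi.single j 1 : Fin K → ℕ) i : ℕ) : ℝ)
        = (m i : ℝ) - (if j = i then (1 : ℝ) else 0) := by
    intro i _
    by_cases hij : j = i
    · subst hij
      rw [if_pos rfl, sub_single_apply_self, Nat.cast_sub h, Nat.cast_one]
    · rw [if_neg hij, sub_single_apply_ne m (fun hc => hij hc.symm), sub_zero]
  rw [Finset.sum_congr rfl hterm, Finset.sum_sub_distrib, Finset.sum_ite_eq]
  simp

lemma gamma_step {K : ℕ} (hK : 1 ≤ K) (α : Fin K → ℝ) (hα : ∀ i, 0 < α i) (m : Fin K → ℕ)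
    (i : Fin K) (h : 1 ≤ m i) (x : Fin K → ℝ) :
    ((∑ k, α k) + (∑ k, (m k : ℝ)) - 1) * hW α x (m - Pi.single i 1)
      = (α i + (m i : ℝ) - 1) * (Cm α m * Pm (m - Pi.single i 1) x) := by
  have hne : Nonempty (Fin K) := Fin.pos_iff_nonempty.mp hK
  have hθ : 0 < ∑ k, α k := Finset.sum_pos (fun k _ => hα k) Finset.univ_nonempty
  have hmi : (1 : ℝ) ≤ (m i : ℝ) := by exact_mod_cast h
  have hM : (1 : ℝ) ≤ ∑ k, (m k : ℝ) := by
    calc (1 : ℝ) ≤ (m i : ℝ) := hmi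
    _ ≤ ∑ k, (m k : ℝ) :=
      Finset.single_le_sum (f := fun k => (m k : ℝ)) (fun k _ => Nat.cast_nonneg _) (mem_univ i)
  have ht : 0 < (∑ k, α k) + (∑ k, (m k : ℝ)) - 1 := by linarith
  have ha : 0 < α i + (m i : ℝ) - 1 := by linarith [hα i]
  rw [hW_eq]
  suffices hkey : ((∑ k, α k) + (∑ k, (m k : ℝ)) - 1) * Cm α (m - Pi.single i 1)
      = (α i + (m i : ℝ) - 1) * Cm α m by
    linear_combination Pm (m - Pi.single i 1) x * hkey
  unfold Cm
  rw [sum_sub_single m i h]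
  have hprod : ∀ m' : Fin K → ℕ, (∏ j, Real.Gamma (α j) / Real.Gamma (α j + m' j))
      = (Real.Gamma (α i) / Real.Gamma (α i + m' i)) *
        ∏ j ∈ univ.erase i, Real.Gamma (α j) / Real.Gamma (α j + m' j) :=
    fun m' => (Finset.mul_prod_erase _ _ (mem_univ i)).symm
  rw [hprod (m - Pi.single i 1), hprod m]
  have hRx : (∏ j ∈ univ.erase i,
        Real.Gamma (α j) / Real.Gamma (α j + ((m - Pi.single i 1 : Fin K → ℕ) j : ℕ)))
      = ∏ j ∈ univ.erase i, Real.Gamma (α j) / Real.Gamma (α j + m j) :=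
    Finset.prod_congr rfl fun j hj => by rw [sub_single_apply_ne m (mem_erase.mp hj).1]
  rw [hRx, sub_single_apply_self, Nat.cast_sub h, Nat.cast_one]
  have hΓθ : Real.Gamma ((∑ k, α k) + ∑ k, (m k : ℝ))
      = ((∑ k, α k) + (∑ k, (m k : ℝ)) - 1) *
        Real.Gamma ((∑ k, α k) + ((∑ k, (m k : ℝ)) - 1)) := by
    have e1 : (∑ k, α k) + ∑ k, (m k : ℝ)
        = ((∑ k, α k) + (∑ k, (m k : ℝ)) - 1) + 1 := by ring
    have e2 : (∑ k, α k) + ((∑ k, (m k : ℝ)) - 1)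
        = (∑ k, α k) + (∑ k, (m k : ℝ)) - 1 := by ring
    nth_rewrite 1 [e1]
    rw [Real.Gamma_add_one (ne_of_gt ht), e2]
  have hΓa : Real.Gamma (α i + (m i : ℝ))
      = (α i + (m i : ℝ) - 1) * Real.Gamma (α i + ((m i : ℝ) - 1)) := by
    have e1 : α i + (m i : ℝ) = (α i + (m i : ℝ) - 1) + 1 := by ring
    have e2 : α i + ((m i : ℝ) - 1) = α i + (m i : ℝ) - 1 := by ring
    nth_rewrite 1 [e1]
    rw [Real.Gamma_add_one (ne_of_gt ha), e2]
  rw [hΓθ, hΓa]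
  have h1 : Real.Gamma (∑ k, α k) ≠ 0 := ne_of_gt (Real.Gamma_pos_of_pos hθ)
  have h2 : Real.Gamma (α i + ((m i : ℝ) - 1)) ≠ 0 := by
    refine ne_of_gt (Real.Gamma_pos_of_pos ?_)
    linarith [hα i]
  have h3 : (∏ j ∈ univ.erase i, Real.Gamma (α j + (m j : ℝ))) ≠ 0 :=
    Finset.prod_ne_zero_iff.mpr fun j _ =>
      ne_of_gt (Real.Gamma_pos_of_pos (add_pos_of_pos_of_nonneg (hα j) (Nat.cast_nonneg _)))
  have h4 : (∏ j ∈ univ.erase i, Real.Gamma (α j)) ≠ 0 :=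
    Finset.prod_ne_zero_iff.mpr fun j _ => ne_of_gt (Real.Gamma_pos_of_pos (hα j))
  field_simp [h1, h2, h3, h4, ne_of_gt ha]

/-- Diagonal term of the diffusion part. -/
lemma diag_term {K : ℕ} (m : Fin K → ℕ) (i : Fin K) (x : Fin K → ℝ) :
    x i * ((m i : ℝ) * (((m - Pi.single i 1 : Fin K → ℕ) i : ℝ) *
        Pm (m - Pi.single i 1 - Pi.single i 1) x))
      = (m i : ℝ) * ((m i : ℝ) - 1) * Pm (m - Pi.single i 1) x := by
  rcases Nat.lt_or_ge (m i) 2 with h2 | h2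
  · have h01 : m i = 0 ∨ m i = 1 := by omega
    rcases h01 with h | h <;> simp [sub_single_apply_self, h]
  · have h1 : 1 ≤ (m - Pi.single i 1 : Fin K → ℕ) i := by rw [sub_single_apply_self]; omega
    have hx := x_mul_Pm (m - Pi.single i 1 : Fin K → ℕ) i x h1
    rw [sub_single_apply_self, Nat.cast_sub (by omega : 1 ≤ m i), Nat.cast_one]
    linear_combination ((m i : ℝ) * ((m i : ℝ) - 1)) * hx

theorem stmt1 (K : ℕ) (hK : 1 ≤ K) (α : Fin K → ℝ) (hα : ∀ i, 0 < α i)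
    (m : Fin K → ℕ) (x : Fin K → ℝ) :
    (1 / 2) * ∑ i, ∑ j, x i * ((if i = j then (1 : ℝ) else 0) - x j) *
          pd (pd (fun y => hW α y m) j) i x
      + (1 / 2) * ∑ i, (α i - (∑ k, α k) * x i) * pd (fun y => hW α y m) i x
    = ((∑ k, α k) + (∑ k, (m k : ℝ)) - 1) / 2 *
        ∑ i, (m i : ℝ) * hW α x (m - Pi.single i 1)
      - (∑ k, (m k : ℝ)) * ((∑ k, α k) + (∑ k, (m k : ℝ)) - 1) / 2 * hW α x m := by
  simp only [pd2_hW, pd_hW]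
  rw [hW_eq]
  -- RHS sum identity
  have hRHS : ((∑ k, α k) + (∑ k, (m k : ℝ)) - 1) *
        ∑ i, (m i : ℝ) * hW α x (m - Pi.single i 1)
      = Cm α m * ((∑ i, α i * (m i : ℝ) * Pm (m - Pi.single i 1) x)
          + ∑ i, (m i : ℝ) * ((m i : ℝ) - 1) * Pm (m - Pi.single i 1) x) := by
    rw [Finset.mul_sum]
    have hterm : ∀ i : Fin K,
        ((∑ k, α k) + (∑ k, (m k : ℝ)) - 1) * ((m i : ℝ) * hW α x (m - Pi.single i 1))
        = Cm α m * (α i * (m i : ℝ) * Pm (m - Pi.single i 1) x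
            + (m i : ℝ) * ((m i : ℝ) - 1) * Pm (m - Pi.single i 1) x) := by
      intro i
      rcases Nat.eq_zero_or_pos (m i) with h0 | h1
      · simp [h0]
      · have hg := gamma_step hK α hα m i h1 x
        linear_combination (m i : ℝ) * hg
    rw [Finset.sum_congr rfl fun i _ => hterm i, ← Finset.mul_sum, ← Finset.sum_add_distrib]
  -- drift sum identity
  have hDrift : (∑ i, (α i - (∑ k, α k) * x i) *
        (Cm α m * ((m i : ℝ) * Pm (m - Pi.single i 1) x)))
      = Cm α m * ((∑ i, α i * (m i : ℝ) * Pm (m - Pi.single i 1) x)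
          - (∑ k, α k) * (∑ k, (m k : ℝ)) * Pm m x) := by
    have hterm : ∀ i : Fin K, (α i - (∑ k, α k) * x i) *
          (Cm α m * ((m i : ℝ) * Pm (m - Pi.single i 1) x))
        = Cm α m * (α i * (m i : ℝ) * Pm (m - Pi.single i 1) x)
          - (∑ k, α k) * Cm α m * ((m i : ℝ) * Pm m x) := by
      intro i
      linear_combination (-(∑ k, α k) * Cm α m) * xP m i x
    rw [Finset.sum_congr rfl fun i _ => hterm i, Finset.sum_sub_distrib,
        ← Finset.mul_sum, ← Finset.mul_sum, ← Finset.sum_mul]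
    ring
  -- diffusion double-sum identity
  have hDouble : (∑ i, ∑ j, x i * ((if i = j then (1 : ℝ) else 0) - x j) *
        (Cm α m * ((m j : ℝ) * (((m - Pi.single j 1 : Fin K → ℕ) i : ℝ) *
          Pm (m - Pi.single j 1 - Pi.single i 1) x))))
      = Cm α m * ((∑ i, (m i : ℝ) * ((m i : ℝ) - 1) * Pm (m - Pi.single i 1) x)
          - (∑ k, (m k : ℝ)) * ((∑ k, (m k : ℝ)) - 1) * Pm m x) := by
    have hsplit : ∀ i : Fin K, (∑ j, x i * ((if i = j then (1 : ℝ) else 0) - x j) *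
          (Cm α m * ((m j : ℝ) * (((m - Pi.single j 1 : Fin K → ℕ) i : ℝ) *
            Pm (m - Pi.single j 1 - Pi.single i 1) x))))
        = x i * (Cm α m * ((m i : ℝ) * (((m - Pi.single i 1 : Fin K → ℕ) i : ℝ) *
            Pm (m - Pi.single i 1 - Pi.single i 1) x)))
          - ∑ j, x i * x j * (Cm α m * ((m j : ℝ) * (((m - Pi.single j 1 : Fin K → ℕ) i : ℝ) *
            Pm (m - Pi.single j 1 - Pi.single i 1) x))) := by
      intro i
      have e : ∀ j : Fin K, x i * ((if i = j then (1 : ℝ) else 0) - x j) *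
            (Cm α m * ((m j : ℝ) * (((m - Pi.single j 1 : Fin K → ℕ) i : ℝ) *
              Pm (m - Pi.single j 1 - Pi.single i 1) x)))
          = (if i = j then x i * (Cm α m * ((m j : ℝ) * (((m - Pi.single j 1 : Fin K → ℕ) i : ℝ) *
              Pm (m - Pi.single j 1 - Pi.single i 1) x))) else 0)
            - x i * x j * (Cm α m * ((m j : ℝ) * (((m - Pi.single j 1 : Fin K → ℕ) i : ℝ) *
              Pm (m - Pi.single j 1 - Pi.single i 1) x))) := by
        intro j
        by_cases h : i = j
        · rw [if_pos h, if_pos h]; ring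
        · rw [if_neg h, if_neg h]; ring
      rw [Finset.sum_congr rfl fun j _ => e j, Finset.sum_sub_distrib, Finset.sum_ite_eq]
      simp
    rw [Finset.sum_congr rfl fun i _ => hsplit i, Finset.sum_sub_distrib]
    have hdiag : (∑ i, x i * (Cm α m * ((m i : ℝ) * (((m - Pi.single i 1 : Fin K → ℕ) i : ℝ) *
          Pm (m - Pi.single i 1 - Pi.single i 1) x))))
        = Cm α m * ∑ i, (m i : ℝ) * ((m i : ℝ) - 1) * Pm (m - Pi.single i 1) x := by
      rw [Finset.mul_sum]
      refine Finset.sum_congr rfl fun i _ => ?_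
      linear_combination Cm α m * diag_term m i x
    have hcross : (∑ i, ∑ j, x i * x j * (Cm α m * ((m j : ℝ) *
          (((m - Pi.single j 1 : Fin K → ℕ) i : ℝ) * Pm (m - Pi.single j 1 - Pi.single i 1) x))))
        = Cm α m * ((∑ k, (m k : ℝ)) * ((∑ k, (m k : ℝ)) - 1) * Pm m x) := by
      rw [Finset.sum_comm]
      have hj : ∀ j : Fin K, (∑ i, x i * x j * (Cm α m * ((m j : ℝ) *
            (((m - Pi.single j 1 : Fin K → ℕ) i : ℝ) * Pm (m - Pi.single j 1 - Pi.single i 1) x))))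
          = Cm α m * ((m j : ℝ) * (((∑ k, (m k : ℝ)) - 1) * Pm m x)) := by
        intro j
        rcases Nat.eq_zero_or_pos (m j) with h0 | h1
        · simp [h0]
        · have hstep : ∀ i : Fin K, x i * x j * (Cm α m * ((m j : ℝ) *
              (((m - Pi.single j 1 : Fin K → ℕ) i : ℝ) * Pm (m - Pi.single j 1 - Pi.single i 1) x)))
              = (x j * (Cm α m * (m j : ℝ))) *
                ((((m - Pi.single j 1 : Fin K → ℕ) i : ℕ) : ℝ) * Pm (m - Pi.single j 1) x) := by
            intro i
            linear_combination (x j * (Cm α m * (m j : ℝ))) * xP (m - Pi.single j 1 : Fin K → ℕ) i x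
          rw [Finset.sum_congr rfl fun i _ => hstep i, ← Finset.mul_sum, ← Finset.sum_mul,
              sum_sub_single m j h1]
          linear_combination (Cm α m * (m j : ℝ) * ((∑ k, (m k : ℝ)) - 1)) * x_mul_Pm m j x h1
      rw [Finset.sum_congr rfl fun j _ => hj j, ← Finset.mul_sum, ← Finset.sum_mul]
      ring
    rw [hdiag, hcross]
    ring
  linear_combination (1 / 2 : ℝ) * hDouble + (1 / 2 : ℝ) * hDrift - (1 / 2 : ℝ) * hRHS
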